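/- There exists ε₀ > 0 such that for all 0 < ε ≤ ε₀ the following hold: φ₁₁(t) < 0 for all t ≥ 0 and φ₁₁(t) = −1/8 for all t ≥ ε; φ₂₂(t) = −1/8 for all t ≥ ε; φ₂₂(0) > 0 and there exists a unique r₀ ∈ (0,ε) with φ₂₂(r₀) = 0; φ₂₂ is differentiable at r₀ with φ₂₂'(r₀) ≠ 0; φ₂(t) ≥ 0 for all t ≥ 0 and φ₂(t) = 0 for all t ≥ ε; and each of φ₁₁, φ₂₂, φ₂ is continuous and bounded on [0,1] and real-analytic on (0,ε). -/

import Mathlib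

open Real Set Filter Topology MeasureTheory

noncomputable def s0 (ε t : ℝ) : ℝ :=
  if 0 ≤ t ∧ t ≤ ε then π/2 + (t/ε) * Real.sqrt (1 - (t/ε)^2) + Real.arcsin (t/ε) else π

noncomputable def s12 (ε t : ℝ) : ℝ :=
  if 0 ≤ t ∧ t ≤ ε then -(2/3) * (1 - (t/ε)^2) ^ ((3:ℝ)/2) else 0

noncomputable def s2 (ε t : ℝ) : ℝ :=
  if 0 ≤ t ∧ t ≤ ε then
    π/8 + (1/12) * ((t/ε) * Real.sqrt (1 - (t/ε)^2) * (5 - 2*(t/ε)^2) + 3 * Real.arcsin (t/ε))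
  else π/4

noncomputable def s22 (ε t : ℝ) : ℝ :=
  if 0 ≤ t ∧ t ≤ ε then
    π/8 + (1/4) * ((t/ε) * Real.sqrt (1 - (t/ε)^2) * (2*(t/ε)^2 - 1) + Real.arcsin (t/ε))
  else π/4

noncomputable def s3 (ε t : ℝ) : ℝ :=
  if 0 ≤ t ∧ t ≤ ε then -(2/15) * (1 - (t/ε)^2) ^ ((5:ℝ)/2) else 0

noncomputable def s32 (ε t : ℝ) : ℝ :=
  if 0 ≤ t ∧ t ≤ ε then -(2/15) * (2 + 3*(t/ε)^2) * (1 - (t/ε)^2) ^ ((3:ℝ)/2) else 0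

noncomputable def phi11 (ε t : ℝ) : ℝ :=
  (1/2) * (s22 ε t * s2 ε t - s3 ε t * s12 ε t) / ((s12 ε t)^2 - s22 ε t * s0 ε t)

noncomputable def phi22 (ε t : ℝ) : ℝ :=
  (1/2) * ((s22 ε t)^2 - s32 ε t * s12 ε t) / ((s12 ε t)^2 - s22 ε t * s0 ε t)

noncomputable def phi2d (ε t : ℝ) : ℝ :=
  s12 ε t / ((s12 ε t)^2 - s22 ε t * s0 ε t)

/-- The principal Sturm–Liouville coefficient on the disc, as a function of the
radius `r`; this is `p(1−r)` in the paper's notation. -/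
noncomputable def pd (ε r0 r : ℝ) : ℝ :=
  (1/8) * (1 - ε) * Real.sign (1 - r0 - r) *
    Real.exp (∫ s in (1-ε)..r, (phi11 ε (1-s) + s * phi2d ε (1-s)) / (s * phi22 ε (1-s)))

/-- `q(1−r)` as a function of `r`. -/
noncomputable def qd (ε r0 r : ℝ) : ℝ :=
  -(pd ε r0 r / r^2) * (phi11 ε (1-r) / phi22 ε (1-r))

/-- The weight `w(1−r)` as a function of `r`. -/
noncomputable def wd (ε r0 r : ℝ) : ℝ := -pd ε r0 r / phi22 ε (1-r)


-- analytic helpers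
lemma aux_analyticAt_rsin (x : ℝ) : AnalyticAt ℝ Real.sin x := by
  have h1 : AnalyticAt ℝ Complex.sin (x : ℂ) :=
    (Complex.differentiable_sin.analyticAt (x:ℂ)).restrictScalars
  have h2 : AnalyticAt ℝ (fun y : ℝ => (Complex.sin (y:ℂ)).re) x :=
    (Complex.reCLM.analyticAt _).comp (h1.comp (Complex.ofRealCLM.analyticAt x))
  exact h2.congr (by filter_upwards with y using by simp [Complex.sin_ofReal_re])

lemma aux_analyticAt_symm (f : OpenPartialHomeomorph ℝ ℝ) {a c : ℝ} (hc : c ≠ 0)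
    (h0 : a ∈ f.target) (hd : HasDerivAt f c (f.symm a)) (h : AnalyticAt ℝ f (f.symm a)) :
    AnalyticAt ℝ f.symm a := by
  apply f.analyticAt_symm (i := ContinuousLinearEquiv.unitsEquivAut ℝ (Units.mk0 c hc)) h0 h
  rw [hd.hasFDerivAt.fderiv]
  ext
  simp [mul_comm]

lemma aux_analyticAt_arcsin {x : ℝ} (h1 : -1 < x) (h2 : x < 1) :
    AnalyticAt ℝ Real.arcsin x := by
  have hc : Real.cos (Real.arcsin x) ≠ 0 := by
    rw [Real.cos_arcsin]
    exact Real.sqrt_ne_zero'.mpr (by nlinarith)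
  exact aux_analyticAt_symm Real.sinPartialHomeomorph hc (by exact ⟨h1, h2⟩)
    (Real.hasDerivAt_sin _) (aux_analyticAt_rsin _)

lemma aux_analyticAt_log {x : ℝ} (hx : 0 < x) : AnalyticAt ℝ Real.log x := by
  have hc : Real.exp (Real.log x) ≠ 0 := (Real.exp_pos _).ne'
  exact aux_analyticAt_symm Real.expPartialHomeomorph hc (by simpa using hx)
    (Real.hasDerivAt_exp _) analyticAt_rexp

lemma aux_analyticAt_sqrt {x : ℝ} (hx : 0 < x) : AnalyticAt ℝ Real.sqrt x := by
  have h : AnalyticAt ℝ (fun y => Real.exp (Real.log y * (1/2))) x :=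
    analyticAt_rexp.comp ((aux_analyticAt_log hx).mul analyticAt_const)
  apply h.congr
  filter_upwards [eventually_gt_nhds hx] with y hy
  have h2 : Real.exp (Real.log y * (1/2)) * Real.exp (Real.log y * (1/2)) = y := by
    rw [← Real.exp_add]
    rw [show Real.log y * (1/2) + Real.log y * (1/2) = Real.log y by ring]
    exact Real.exp_log hy
  conv_rhs => rw [← h2]
  exact (Real.sqrt_mul_self (Real.exp_pos _).le).symm


noncomputable def F0 (x : ℝ) : ℝ := π/2 + x * Real.sqrt (1-x^2) + Real.arcsin x
noncomputable def F12 (x : ℝ) : ℝ := -(2/3) * Real.sqrt (1-x^2) ^ 3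
noncomputable def F2 (x : ℝ) : ℝ :=
  π/8 + (1/12) * (x * Real.sqrt (1-x^2) * (5 - 2*x^2) + 3 * Real.arcsin x)
noncomputable def F22 (x : ℝ) : ℝ :=
  π/8 + (1/4) * (x * Real.sqrt (1-x^2) * (2*x^2 - 1) + Real.arcsin x)
noncomputable def F3 (x : ℝ) : ℝ := -(2/15) * Real.sqrt (1-x^2) ^ 5
noncomputable def F32 (x : ℝ) : ℝ := -(2/15) * (2 + 3*x^2) * Real.sqrt (1-x^2) ^ 3

noncomputable def DD (x : ℝ) : ℝ := F12 x ^ 2 - F22 x * F0 x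
noncomputable def N11 (x : ℝ) : ℝ := F22 x * F2 x - F3 x * F12 x
noncomputable def N22 (x : ℝ) : ℝ := F22 x ^ 2 - F32 x * F12 x

-- basic bounds on [0,1]
lemma aux_arcsin_ge {x : ℝ} (hx : 0 ≤ x) (hx1 : x ≤ 1) : x ≤ Real.arcsin x := by
  have h := Real.sin_le (Real.arcsin_nonneg.2 hx)
  rwa [Real.sin_arcsin (by linarith) hx1] at h

section bounds
variable {x : ℝ} (hx : 0 ≤ x) (hx1 : x ≤ 1)
include hx hx1

lemma aux_s_nonneg : 0 ≤ Real.sqrt (1-x^2) := Real.sqrt_nonneg _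
lemma aux_s_le_one : Real.sqrt (1-x^2) ≤ 1 := by
  exact Real.sqrt_le_one.mpr (by nlinarith)

lemma F0_ge : π/2 ≤ F0 x := by
  have h1 := Real.sqrt_nonneg (1-x^2)
  have h2 := aux_arcsin_ge hx hx1
  unfold F0; nlinarith

lemma F22_ge : π/8 ≤ F22 x := by
  have h1 := Real.sqrt_nonneg (1-x^2)
  have h2 := aux_arcsin_ge hx hx1
  have h3 := aux_s_le_one hx hx1
  have h4 : 0 ≤ x * (1 - Real.sqrt (1-x^2)) := mul_nonneg hx (by linarith)
  have h5 : 0 ≤ x^3 * Real.sqrt (1-x^2) := mul_nonneg (by positivity) h1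
  unfold F22; nlinarith

lemma F2_ge : π/8 ≤ F2 x := by
  have h1 := Real.sqrt_nonneg (1-x^2)
  have h2 := aux_arcsin_ge hx hx1
  have h5 : 0 ≤ x * Real.sqrt (1-x^2) * (5 - 2*x^2) :=
    mul_nonneg (mul_nonneg hx h1) (by nlinarith)
  unfold F2; nlinarith

lemma DD_neg : DD x < 0 := by
  have h1 := aux_s_nonneg hx hx1
  have h2 := aux_s_le_one hx hx1
  have h3 := F0_ge hx hx1
  have h4 := F22_ge hx hx1
  have hπ := Real.pi_gt_three
  have h5 : Real.sqrt (1-x^2) ^ 3 ≤ 1 := pow_le_one₀ h1 h2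
  have h6 : (0:ℝ) ≤ Real.sqrt (1-x^2) ^ 3 := by positivity
  have h7 : π/8 * (π/2) ≤ F22 x * F0 x :=
    mul_le_mul h4 h3 (by positivity) (by linarith)
  unfold DD F12
  nlinarith

lemma N11_pos : 0 < N11 x := by
  have h1 := aux_s_nonneg hx hx1
  have h2 := aux_s_le_one hx hx1
  have h3 := F2_ge hx hx1
  have h4 := F22_ge hx hx1
  have hπ := Real.pi_gt_three
  have h5 : Real.sqrt (1-x^2) ^ 5 ≤ 1 := pow_le_one₀ h1 h2
  have h6 : (0:ℝ) ≤ Real.sqrt (1-x^2) ^ 5 := by positivity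
  have h5' : Real.sqrt (1-x^2) ^ 3 ≤ 1 := pow_le_one₀ h1 h2
  have h6' : (0:ℝ) ≤ Real.sqrt (1-x^2) ^ 3 := by positivity
  have h7 : π/8 * (π/8) ≤ F22 x * F2 x :=
    mul_le_mul h4 h3 (by positivity) (by linarith)
  have h8 : F3 x * F12 x = (4/45) * (Real.sqrt (1-x^2)^5 * Real.sqrt (1-x^2)^3) := by
    unfold F3 F12; ring
  unfold N11
  nlinarith [mul_le_one₀ h5 h6' h5', mul_nonneg h6 h6']

lemma F12_nonpos : F12 x ≤ 0 := by
  have h1 := aux_s_nonneg hx hx1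
  have h2 : (0:ℝ) ≤ Real.sqrt (1-x^2)^3 := by positivity
  unfold F12; nlinarith
end bounds

-- endpoint values
lemma F0_one : F0 1 = π := by unfold F0; norm_num [Real.arcsin_one]
lemma F12_one : F12 1 = 0 := by unfold F12; norm_num
lemma F2_one : F2 1 = π/4 := by unfold F2; norm_num [Real.arcsin_one]; ring
lemma F22_one : F22 1 = π/4 := by unfold F22; norm_num [Real.arcsin_one]; ring
lemma F3_one : F3 1 = 0 := by unfold F3; norm_num
lemma F32_one : F32 1 = 0 := by unfold F32; norm_num
lemma F22_zero : F22 0 = π/8 := by unfold F22; norm_num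
lemma F12_zero : F12 0 = -(2/3) := by unfold F12; norm_num
lemma F32_zero : F32 0 = -(4/15) := by unfold F32; norm_num
lemma DD_one : DD 1 = -(π^2/4) := by unfold DD; rw [F12_one, F22_one, F0_one]; ring
lemma N22_zero_neg : N22 0 < 0 := by
  unfold N22
  rw [F22_zero, F12_zero, F32_zero]
  have h1 := Real.pi_gt_three
  have h2 := Real.pi_lt_d2
  nlinarith
lemma N22_one_pos : 0 < N22 1 := by
  unfold N22
  rw [F22_one, F12_one, F32_one]
  have h1 := Real.pi_gt_three
  nlinarith

-- derivatives
lemma sqrtD {x : ℝ} (h1 : -1 < x) (h2 : x < 1) :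
    HasDerivAt (fun y : ℝ => Real.sqrt (1-y^2)) (-x / Real.sqrt (1-x^2)) x := by
  have hne : (1:ℝ) - x^2 ≠ 0 := by nlinarith
  have h0 : HasDerivAt (fun y : ℝ => 1 - y^2) (-(2*x)) x := by
    simpa using ((hasDerivAt_pow 2 x).const_sub 1)
  have hh := h0.sqrt hne
  refine (hh.congr_deriv ?_); symm
  have hs : Real.sqrt (1-x^2) ≠ 0 := Real.sqrt_ne_zero'.mpr (by nlinarith)
  field_simp

lemma arcsinD {x : ℝ} (h1 : -1 < x) (h2 : x < 1) :
    HasDerivAt Real.arcsin (1 / Real.sqrt (1-x^2)) x :=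
  Real.hasDerivAt_arcsin (ne_of_gt h1) (ne_of_lt h2)

lemma F22D {x : ℝ} (h1 : 0 < x) (h2 : x < 1) :
    HasDerivAt F22 (2*x^2*Real.sqrt (1-x^2)) x := by
  have hs := sqrtD (by linarith) h2
  have ha := arcsinD (by linarith) h2
  have h3 : HasDerivAt (fun y : ℝ => 2*y^2-1) (4*x) x := by
    have := ((hasDerivAt_pow 2 x).const_mul 2).sub_const 1
    refine (this.congr_deriv ?_); symm; simp; ring
  have hprod := ((hasDerivAt_id x).mul hs).mul h3
  have hT := hprod.add ha
  have hh := (hT.const_mul (1/4)).const_add (π/8)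
  refine (hh.congr_deriv ?_); symm
  have hpos : (0:ℝ) < 1 - x^2 := by nlinarith
  have hsne : Real.sqrt (1-x^2) ≠ 0 := Real.sqrt_ne_zero'.mpr hpos
  have hs2 : Real.sqrt (1-x^2) ^ 2 = 1-x^2 := Real.sq_sqrt hpos.le
  simp only [id, Pi.mul_apply, Pi.pow_apply]
  field_simp
  ring_nf
  linear_combination (1+2*x^2)*hs2

lemma F12D {x : ℝ} (h1 : 0 < x) (h2 : x < 1) :
    HasDerivAt F12 (2*x*Real.sqrt (1-x^2)) x := by
  have hs := sqrtD (by linarith) h2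
  have hh := (hs.pow 3).const_mul (-(2/3))
  refine (hh.congr_deriv ?_); symm
  have hpos : (0:ℝ) < 1 - x^2 := by nlinarith
  have hsne : Real.sqrt (1-x^2) ≠ 0 := Real.sqrt_ne_zero'.mpr hpos
  have hs2 : Real.sqrt (1-x^2) ^ 2 = 1-x^2 := Real.sq_sqrt hpos.le
  field_simp
  ring_nf

lemma F32D {x : ℝ} (h1 : 0 < x) (h2 : x < 1) :
    HasDerivAt F32 (2*x^3*Real.sqrt (1-x^2)) x := by
  have hs := sqrtD (by linarith) h2
  have hq : HasDerivAt (fun y : ℝ => 2 + 3*y^2) (6*x) x := by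
    have := ((hasDerivAt_pow 2 x).const_mul 3).const_add 2
    refine (this.congr_deriv ?_); symm; simp; ring
  have hh := ((hq.mul (hs.pow 3)).const_mul (-(2/15)))
  have hF : F32 = fun y : ℝ => -(2/15) * ((2 + 3*y^2) * Real.sqrt (1-y^2) ^ 3) := by
    funext y; unfold F32; ring
  rw [hF]
  refine (hh.congr_deriv ?_); symm
  have hpos : (0:ℝ) < 1 - x^2 := by nlinarith
  have hsne : Real.sqrt (1-x^2) ≠ 0 := Real.sqrt_ne_zero'.mpr hpos
  have hs2 : Real.sqrt (1-x^2) ^ 2 = 1-x^2 := Real.sq_sqrt hpos.le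
  simp only [Pi.mul_apply, Pi.pow_apply]
  field_simp
  ring_nf
  have hs4 : Real.sqrt (1-x^2)^4 = (1-x^2)^2 := by
    rw [show 4 = 2*2 from rfl, pow_mul, hs2]
  linear_combination (6*Real.sqrt (1-x^2)^2) * hs2

lemma F0D {x : ℝ} (h1 : 0 < x) (h2 : x < 1) : ∃ d, HasDerivAt F0 d x := by
  have hs := sqrtD (by linarith) h2
  have ha := arcsinD (by linarith) h2
  exact ⟨_, ((hasDerivAt_const x (π/2)).add ((hasDerivAt_id x).mul hs)).add ha⟩

lemma N22D {x : ℝ} (h1 : 0 < x) (h2 : x < 1) :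
    HasDerivAt N22
      (4*x^2*Real.sqrt (1-x^2)*F22 x + (8/15)*x*(1+4*x^2)*(1-x^2)^2) x := by
  have h := ((F22D h1 h2).pow 2).sub ((F32D h1 h2).mul (F12D h1 h2))
  refine (h.congr_deriv ?_); symm
  have hpos : (0:ℝ) < 1 - x^2 := by nlinarith
  have hs2 : Real.sqrt (1-x^2) ^ 2 = 1-x^2 := Real.sq_sqrt hpos.le
  have hs4 : Real.sqrt (1-x^2)^4 = (1-x^2)^2 := by
    rw [show 4 = 2*2 from rfl, pow_mul, hs2]
  unfold F32 F12
  ring_nf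
  linear_combination (-(8/15)*x - (32/15)*x^3) * hs4

lemma contF : Continuous F0 ∧ Continuous F12 ∧ Continuous F2 ∧ Continuous F22 ∧
    Continuous F3 ∧ Continuous F32 := by
  have hs : Continuous (fun y : ℝ => Real.sqrt (1-y^2)) :=
    Real.continuous_sqrt.comp (by continuity)
  have ha : Continuous Real.arcsin := Real.continuous_arcsin
  refine ⟨?_, ?_, ?_, ?_, ?_, ?_⟩ <;> [unfold F0; unfold F12; unfold F2; unfold F22;
    unfold F3; unfold F32] <;> continuity

lemma contN22 : Continuous N22 := by
  obtain ⟨h0, h12, h2, h22, h3, h32⟩ := contF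
  unfold N22; continuity

lemma N22mono : StrictMonoOn N22 (Icc (0:ℝ) 1) := by
  apply strictMonoOn_of_deriv_pos (convex_Icc 0 1) contN22.continuousOn
  intro x hx
  rw [interior_Icc] at hx
  rw [(N22D hx.1 hx.2).deriv]
  have hF := F22_ge hx.1.le hx.2.le
  have hπ := Real.pi_gt_three
  have hsn := Real.sqrt_nonneg (1-x^2)
  have t1 : 0 ≤ 4*x^2*Real.sqrt (1-x^2)*F22 x :=
    mul_nonneg (mul_nonneg (by positivity) hsn) (by linarith)
  have t2 : 0 < (8/15)*x*(1+4*x^2)*(1-x^2)^2 := by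
    have hx2 : (0:ℝ) < 1 - x^2 := by nlinarith [hx.1, hx.2]
    exact mul_pos (mul_pos (mul_pos (by norm_num) hx.1) (by nlinarith)) (pow_pos hx2 2)
  linarith

-- analyticity of the building blocks
lemma analyticF {x : ℝ} (h1 : 0 < x) (h2 : x < 1) :
    AnalyticAt ℝ F0 x ∧ AnalyticAt ℝ F12 x ∧ AnalyticAt ℝ F2 x ∧ AnalyticAt ℝ F22 x ∧
    AnalyticAt ℝ F3 x ∧ AnalyticAt ℝ F32 x := by
  have hin : AnalyticAt ℝ (fun y : ℝ => 1 - y^2) x :=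
    analyticAt_const.sub ((analyticAt_id).pow 2)
  have hs : AnalyticAt ℝ (fun y : ℝ => Real.sqrt (1-y^2)) x :=
    (aux_analyticAt_sqrt (by nlinarith)).comp hin
  have ha : AnalyticAt ℝ Real.arcsin x := aux_analyticAt_arcsin (by linarith) h2
  refine ⟨?_, ?_, ?_, ?_, ?_, ?_⟩
  · exact (analyticAt_const.add ((analyticAt_id).mul hs)).add ha
  · exact analyticAt_const.mul (hs.pow 3)
  · exact analyticAt_const.add (analyticAt_const.mul
      ((((analyticAt_id).mul hs).mul (analyticAt_const.sub (analyticAt_const.mul ((analyticAt_id).pow 2)))).add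
        (analyticAt_const.mul ha)))
  · exact analyticAt_const.add (analyticAt_const.mul
      ((((analyticAt_id).mul hs).mul ((analyticAt_const.mul ((analyticAt_id).pow 2)).sub analyticAt_const)).add ha))
  · exact analyticAt_const.mul (hs.pow 5)
  · exact (analyticAt_const.mul (analyticAt_const.add (analyticAt_const.mul ((analyticAt_id).pow 2)))).mul (hs.pow 3)

noncomputable def P11 (x : ℝ) : ℝ :=
  (1/2) * (F22 x * F2 x - F3 x * F12 x) / (F12 x ^ 2 - F22 x * F0 x)
noncomputable def P22 (x : ℝ) : ℝ :=
  (1/2) * (F22 x ^ 2 - F32 x * F12 x) / (F12 x ^ 2 - F22 x * F0 x)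
noncomputable def P2 (x : ℝ) : ℝ := F12 x / (F12 x ^ 2 - F22 x * F0 x)

lemma aux_rpow32 {a : ℝ} (ha : 0 ≤ a) : a ^ ((3:ℝ)/2) = Real.sqrt a ^ 3 := by
  rw [show (3:ℝ)/2 = 1/(2:ℝ) * (3:ℕ) by norm_num, Real.rpow_mul ha, Real.rpow_natCast,
    Real.sqrt_eq_rpow]

lemma aux_rpow52 {a : ℝ} (ha : 0 ≤ a) : a ^ ((5:ℝ)/2) = Real.sqrt a ^ 5 := by
  rw [show (5:ℝ)/2 = 1/(2:ℝ) * (5:ℕ) by norm_num, Real.rpow_mul ha, Real.rpow_natCast,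
    Real.sqrt_eq_rpow]

section reps
variable {ε t : ℝ} (hε : 0 < ε) (ht : 0 ≤ t)
include hε ht

lemma aux_ha (h : t ≤ ε) : 0 ≤ 1 - (t/ε)^2 := by
  have h1 : 0 ≤ t/ε := div_nonneg ht hε.le
  have h2 : t/ε ≤ 1 := (div_le_one hε).2 h
  nlinarith

lemma s0_rep : s0 ε t = F0 (min (t/ε) 1) := by
  unfold s0
  rcases le_or_gt t ε with h | h
  · rw [if_pos ⟨ht, h⟩, min_eq_left ((div_le_one hε).2 h)]; rfl
  · rw [if_neg (fun hc => absurd hc.2 (not_le.2 h)), min_eq_right ((one_le_div hε).2 h.le), F0_one]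

lemma s12_rep : s12 ε t = F12 (min (t/ε) 1) := by
  unfold s12
  rcases le_or_gt t ε with h | h
  · rw [if_pos ⟨ht, h⟩, min_eq_left ((div_le_one hε).2 h)]
    unfold F12; rw [aux_rpow32 (aux_ha hε ht h)]
  · rw [if_neg (fun hc => absurd hc.2 (not_le.2 h)), min_eq_right ((one_le_div hε).2 h.le), F12_one]

lemma s2_rep : s2 ε t = F2 (min (t/ε) 1) := by
  unfold s2
  rcases le_or_gt t ε with h | h
  · rw [if_pos ⟨ht, h⟩, min_eq_left ((div_le_one hε).2 h)]; rfl
  · rw [if_neg (fun hc => absurd hc.2 (not_le.2 h)), min_eq_right ((one_le_div hε).2 h.le), F2_one]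

lemma s22_rep : s22 ε t = F22 (min (t/ε) 1) := by
  unfold s22
  rcases le_or_gt t ε with h | h
  · rw [if_pos ⟨ht, h⟩, min_eq_left ((div_le_one hε).2 h)]; rfl
  · rw [if_neg (fun hc => absurd hc.2 (not_le.2 h)), min_eq_right ((one_le_div hε).2 h.le), F22_one]

lemma s3_rep : s3 ε t = F3 (min (t/ε) 1) := by
  unfold s3
  rcases le_or_gt t ε with h | h
  · rw [if_pos ⟨ht, h⟩, min_eq_left ((div_le_one hε).2 h)]
    unfold F3; rw [aux_rpow52 (aux_ha hε ht h)]
  · rw [if_neg (fun hc => absurd hc.2 (not_le.2 h)), min_eq_right ((one_le_div hε).2 h.le), F3_one]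

lemma s32_rep : s32 ε t = F32 (min (t/ε) 1) := by
  unfold s32
  rcases le_or_gt t ε with h | h
  · rw [if_pos ⟨ht, h⟩, min_eq_left ((div_le_one hε).2 h)]
    unfold F32; rw [aux_rpow32 (aux_ha hε ht h)]
  · rw [if_neg (fun hc => absurd hc.2 (not_le.2 h)), min_eq_right ((one_le_div hε).2 h.le), F32_one]

lemma phi11_rep : phi11 ε t = P11 (min (t/ε) 1) := by
  unfold phi11 P11
  rw [s0_rep hε ht, s12_rep hε ht, s2_rep hε ht, s22_rep hε ht, s3_rep hε ht]

lemma phi22_rep : phi22 ε t = P22 (min (t/ε) 1) := by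
  unfold phi22 P22
  rw [s0_rep hε ht, s12_rep hε ht, s22_rep hε ht, s32_rep hε ht]

lemma phi2d_rep : phi2d ε t = P2 (min (t/ε) 1) := by
  unfold phi2d P2
  rw [s0_rep hε ht, s12_rep hε ht, s22_rep hε ht]

end reps

lemma P11_one : P11 1 = -(1/8) := by
  unfold P11
  rw [F22_one, F2_one, F3_one, F12_one, F0_one]
  have hne : ((0:ℝ)^2 - π/4*π) ≠ 0 := by nlinarith [Real.pi_gt_three]
  rw [div_eq_iff hne]; ring

lemma P22_one : P22 1 = -(1/8) := by
  unfold P22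
  rw [F22_one, F32_one, F12_one, F0_one]
  have hne : ((0:ℝ)^2 - π/4*π) ≠ 0 := by nlinarith [Real.pi_gt_three]
  rw [div_eq_iff hne]; ring

lemma P2_one : P2 1 = 0 := by
  unfold P2
  rw [F12_one]
  simp

lemma contN11 : Continuous N11 := by
  obtain ⟨h0, h12, h2, h22, h3, h32⟩ := contF
  unfold N11; continuity

lemma contDD : Continuous DD := by
  obtain ⟨h0, h12, h2, h22, h3, h32⟩ := contF
  unfold DD; continuity

lemma N22deriv_pos {x : ℝ} (h1 : 0 < x) (h2 : x < 1) :
    0 < 4*x^2*Real.sqrt (1-x^2)*F22 x + (8/15)*x*(1+4*x^2)*(1-x^2)^2 := by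
  have hF := F22_ge h1.le h2.le
  have hπ := Real.pi_gt_three
  have hsn := Real.sqrt_nonneg (1-x^2)
  have t1 : 0 ≤ 4*x^2*Real.sqrt (1-x^2)*F22 x :=
    mul_nonneg (mul_nonneg (by positivity) hsn) (by linarith)
  have hx2 : (0:ℝ) < 1 - x^2 := by nlinarith
  have t2 : 0 < (8/15)*x*(1+4*x^2)*(1-x^2)^2 :=
    mul_pos (mul_pos (mul_pos (by norm_num) h1) (by nlinarith)) (pow_pos hx2 2)
  linarith


theorem stmt13 :
    ∃ ε₀ > (0:ℝ), ∀ ε : ℝ, 0 < ε → ε ≤ ε₀ →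
      (∀ t : ℝ, 0 ≤ t → phi11 ε t < 0) ∧
      (∀ t : ℝ, ε ≤ t → phi11 ε t = -(1/8)) ∧
      (∀ t : ℝ, ε ≤ t → phi22 ε t = -(1/8)) ∧
      0 < phi22 ε 0 ∧
      (∃ r0 ∈ Ioo (0:ℝ) ε, phi22 ε r0 = 0 ∧
        (∀ r' ∈ Ioo (0:ℝ) ε, phi22 ε r' = 0 → r' = r0) ∧
        ∃ d : ℝ, d ≠ 0 ∧ HasDerivAt (phi22 ε) d r0) ∧
      (∀ t : ℝ, 0 ≤ t → 0 ≤ phi2d ε t) ∧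
      (∀ t : ℝ, ε ≤ t → phi2d ε t = 0) ∧
      (ContinuousOn (phi11 ε) (Icc 0 1) ∧ ContinuousOn (phi22 ε) (Icc 0 1) ∧
        ContinuousOn (phi2d ε) (Icc 0 1)) ∧
      (∃ C : ℝ, ∀ t ∈ Icc (0:ℝ) 1,
        |phi11 ε t| ≤ C ∧ |phi22 ε t| ≤ C ∧ |phi2d ε t| ≤ C) ∧
      (AnalyticOnNhd ℝ (phi11 ε) (Ioo 0 ε) ∧ AnalyticOnNhd ℝ (phi22 ε) (Ioo 0 ε) ∧
        AnalyticOnNhd ℝ (phi2d ε) (Ioo 0 ε)) := by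
  refine ⟨1, one_pos, fun ε hε hε1 => ?_⟩
  have hεne : ε ≠ 0 := hε.ne'
  have hmem : ∀ t : ℝ, 0 ≤ t → min (t/ε) 1 ∈ Icc (0:ℝ) 1 := fun t ht =>
    ⟨le_min (div_nonneg ht hε.le) zero_le_one, min_le_right _ _⟩
  -- the zero of N22
  obtain ⟨x0, hx0mem, hx0⟩ :=
    intermediate_value_Ioo zero_le_one contN22.continuousOn ⟨N22_zero_neg, N22_one_pos⟩
  have hr0pos : 0 < ε * x0 := mul_pos hε hx0mem.1
  have hr0lt : ε * x0 < ε := by nlinarith [hx0mem.2]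
  have hr0div : ε * x0 / ε = x0 := by field_simp
  -- continuity of the three phis on [0,1]
  have hmin : Continuous (fun t : ℝ => min (t/ε) 1) :=
    (continuous_id.div_const ε).min continuous_const
  have hmapsTo : MapsTo (fun t : ℝ => min (t/ε) 1) (Icc (0:ℝ) 1) (Icc (0:ℝ) 1) :=
    fun t ht => hmem t ht.1
  have hDneOn : ∀ y ∈ Icc (0:ℝ) 1, DD y ≠ 0 := fun y hy => (DD_neg hy.1 hy.2).ne
  obtain ⟨c0, c12, c2, c22, c3, c32⟩ := contF
  have h11c : ContinuousOn P11 (Icc (0:ℝ) 1) := by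
    have : ContinuousOn (fun y => (1/2) * N11 y / DD y) (Icc (0:ℝ) 1) :=
      (continuous_const.mul contN11).continuousOn.div contDD.continuousOn hDneOn
    exact this
  have h22c : ContinuousOn P22 (Icc (0:ℝ) 1) := by
    have hN : Continuous N22 := contN22
    have : ContinuousOn (fun y => (1/2) * N22 y / DD y) (Icc (0:ℝ) 1) :=
      (continuous_const.mul hN).continuousOn.div contDD.continuousOn hDneOn
    exact this
  have h2c : ContinuousOn P2 (Icc (0:ℝ) 1) := by
    have : ContinuousOn (fun y => F12 y / DD y) (Icc (0:ℝ) 1) :=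
      c12.continuousOn.div contDD.continuousOn hDneOn
    exact this
  have hcont11 : ContinuousOn (phi11 ε) (Icc (0:ℝ) 1) :=
    (h11c.comp hmin.continuousOn hmapsTo).congr fun t ht => phi11_rep hε ht.1
  have hcont22 : ContinuousOn (phi22 ε) (Icc (0:ℝ) 1) :=
    (h22c.comp hmin.continuousOn hmapsTo).congr fun t ht => phi22_rep hε ht.1
  have hcont2d : ContinuousOn (phi2d ε) (Icc (0:ℝ) 1) :=
    (h2c.comp hmin.continuousOn hmapsTo).congr fun t ht => phi2d_rep hε ht.1
  refine ⟨?_, ?_, ?_, ?_, ?_, ?_, ?_, ?_, ?_, ?_⟩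
  · -- phi11 < 0
    intro t ht
    rw [phi11_rep hε ht]
    have hy := hmem t ht
    have hN := N11_pos hy.1 hy.2
    have hD := DD_neg hy.1 hy.2
    show (1/2) * N11 _ / DD _ < 0
    exact div_neg_of_pos_of_neg (by linarith) hD
  · -- phi11 = -1/8 beyond ε
    intro t ht
    rw [phi11_rep hε (le_trans hε.le ht), min_eq_right ((one_le_div hε).2 ht), P11_one]
  · intro t ht
    rw [phi22_rep hε (le_trans hε.le ht), min_eq_right ((one_le_div hε).2 ht), P22_one]
  · -- phi22 0 > 0
    rw [phi22_rep hε le_rfl, zero_div, min_eq_left zero_le_one]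
    have hD := DD_neg (le_refl (0:ℝ)) zero_le_one
    have hN := N22_zero_neg
    show 0 < (1/2) * N22 0 / DD 0
    exact div_pos_of_neg_of_neg (by linarith) hD
  · -- the zero r0 of phi22
    refine ⟨ε * x0, ⟨hr0pos, hr0lt⟩, ?_, ?_, ?_⟩
    · rw [phi22_rep hε hr0pos.le, hr0div, min_eq_left hx0mem.2.le]
      show (1/2) * N22 x0 / DD x0 = 0
      rw [hx0]; simp
    · intro r' hr' h0'
      have hx' : r'/ε ∈ Ioo (0:ℝ) 1 := ⟨div_pos hr'.1 hε, (div_lt_one hε).2 hr'.2⟩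
      rw [phi22_rep hε hr'.1.le, min_eq_left hx'.2.le] at h0'
      have hDne : DD (r'/ε) ≠ 0 := (DD_neg hx'.1.le hx'.2.le).ne
      have hNz : N22 (r'/ε) = 0 := by
        have h0'' : (1/2) * N22 (r'/ε) / DD (r'/ε) = 0 := h0'
        rcases div_eq_zero_iff.1 h0'' with h | h
        · linarith
        · exact absurd h hDne
      have heq : r'/ε = x0 :=
        N22mono.injOn ⟨hx'.1.le, hx'.2.le⟩ ⟨hx0mem.1.le, hx0mem.2.le⟩ (by rw [hNz, hx0])
      rw [div_eq_iff hεne] at heq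
      linarith
    · -- derivative
      have hN22D := N22D hx0mem.1 hx0mem.2
      obtain ⟨d0, hF0D⟩ := F0D hx0mem.1 hx0mem.2
      obtain ⟨dD, hDD'⟩ : ∃ d, HasDerivAt DD d x0 :=
        ⟨_, ((F12D hx0mem.1 hx0mem.2).pow 2).sub ((F22D hx0mem.1 hx0mem.2).mul hF0D)⟩
      have hDne : DD x0 ≠ 0 := (DD_neg hx0mem.1.le hx0mem.2.le).ne
      have hP : HasDerivAt P22
          ((1/2 * (4*x0^2*Real.sqrt (1-x0^2)*F22 x0 + (8/15)*x0*(1+4*x0^2)*(1-x0^2)^2) * DD x0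
            - 1/2 * N22 x0 * dD) / DD x0 ^ 2) x0 :=
        (hN22D.const_mul (1/2)).div hDD' hDne
      have hDlt := DD_neg hx0mem.1.le hx0mem.2.le
      have hn' := N22deriv_pos hx0mem.1 hx0mem.2
      have hd1 : (1/2 * (4*x0^2*Real.sqrt (1-x0^2)*F22 x0 + (8/15)*x0*(1+4*x0^2)*(1-x0^2)^2) * DD x0
            - 1/2 * N22 x0 * dD) / DD x0 ^ 2 < 0 := by
        rw [hx0]
        have hsq : 0 < DD x0 ^ 2 := by nlinarith
        apply div_neg_of_neg_of_pos _ hsq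
        nlinarith
      have hdiv : HasDerivAt (fun t : ℝ => t/ε) (1/ε) (ε * x0) := (hasDerivAt_id _).div_const ε
      have hcomp := HasDerivAt.comp (ε*x0)
        (show HasDerivAt P22 _ (ε*x0/ε) by rw [hr0div]; exact hP) hdiv
      have hev : phi22 ε =ᶠ[𝓝 (ε*x0)] (P22 ∘ fun t : ℝ => t/ε) := by
        filter_upwards [Ioo_mem_nhds hr0pos hr0lt] with u hu
        rw [Function.comp_apply, phi22_rep hε hu.1.le,
          min_eq_left ((div_le_one hε).2 hu.2.le)]
      exact ⟨_, (mul_neg_of_neg_of_pos hd1 (by positivity : (0:ℝ) < 1/ε)).ne,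
        hcomp.congr_of_eventuallyEq hev⟩
  · -- phi2d ≥ 0
    intro t ht
    rw [phi2d_rep hε ht]
    have hy := hmem t ht
    have h12 := F12_nonpos hy.1 hy.2
    have hD := DD_neg hy.1 hy.2
    show 0 ≤ F12 _ / DD _
    have h := div_nonneg (neg_nonneg.2 h12) (neg_nonneg.2 hD.le)
    rwa [neg_div_neg_eq] at h
  · intro t ht
    rw [phi2d_rep hε (le_trans hε.le ht), min_eq_right ((one_le_div hε).2 ht), P2_one]
  · exact ⟨hcont11, hcont22, hcont2d⟩
  · obtain ⟨C1, hC1⟩ := isCompact_Icc.exists_bound_of_continuousOn hcont11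
    obtain ⟨C2, hC2⟩ := isCompact_Icc.exists_bound_of_continuousOn hcont22
    obtain ⟨C3, hC3⟩ := isCompact_Icc.exists_bound_of_continuousOn hcont2d
    refine ⟨max C1 (max C2 C3), fun t ht => ⟨?_, ?_, ?_⟩⟩
    · exact le_trans (by simpa using hC1 t ht) (le_max_left _ _)
    · exact le_trans (by simpa using hC2 t ht) (le_trans (le_max_left _ _) (le_max_right _ _))
    · exact le_trans (by simpa using hC3 t ht) (le_trans (le_max_right _ _) (le_max_right _ _))
  · have key : ∀ t ∈ Ioo (0:ℝ) ε,
        AnalyticAt ℝ (phi11 ε) t ∧ AnalyticAt ℝ (phi22 ε) t ∧ AnalyticAt ℝ (phi2d ε) t := by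
      intro t ht
      have hx : t/ε ∈ Ioo (0:ℝ) 1 := ⟨div_pos ht.1 hε, (div_lt_one hε).2 ht.2⟩
      obtain ⟨hA0, hA12, hA2, hA22, hA3, hA32⟩ := analyticF hx.1 hx.2
      have hDne : (F12 (t/ε) ^ 2 - F22 (t/ε) * F0 (t/ε)) ≠ 0 :=
        (DD_neg hx.1.le hx.2.le).ne
      have hAdiv : AnalyticAt ℝ (fun y : ℝ => y/ε) t :=
        analyticAt_id.div analyticAt_const hεne
      have h1 : AnalyticAt ℝ P11 (t/ε) :=
        (analyticAt_const.mul ((hA22.mul hA2).sub (hA3.mul hA12))).div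
          ((hA12.pow 2).sub (hA22.mul hA0)) hDne
      have h2 : AnalyticAt ℝ P22 (t/ε) :=
        (analyticAt_const.mul ((hA22.pow 2).sub (hA32.mul hA12))).div
          ((hA12.pow 2).sub (hA22.mul hA0)) hDne
      have h3 : AnalyticAt ℝ P2 (t/ε) :=
        hA12.div ((hA12.pow 2).sub (hA22.mul hA0)) hDne
      have c1 : AnalyticAt ℝ (P11 ∘ fun y : ℝ => y/ε) t :=
        AnalyticAt.comp (f := fun y : ℝ => y/ε) h1 hAdiv
      have c2 : AnalyticAt ℝ (P22 ∘ fun y : ℝ => y/ε) t :=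
        AnalyticAt.comp (f := fun y : ℝ => y/ε) h2 hAdiv
      have c3 : AnalyticAt ℝ (P2 ∘ fun y : ℝ => y/ε) t :=
        AnalyticAt.comp (f := fun y : ℝ => y/ε) h3 hAdiv
      refine ⟨c1.congr ?_, c2.congr ?_, c3.congr ?_⟩ <;>
      · filter_upwards [Ioo_mem_nhds ht.1 ht.2] with u hu
        rw [Function.comp_apply]
        first
        | rw [phi11_rep hε hu.1.le, min_eq_left ((div_le_one hε).2 hu.2.le)]
        | rw [phi22_rep hε hu.1.le, min_eq_left ((div_le_one hε).2 hu.2.le)]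
        | rw [phi2d_rep hε hu.1.le, min_eq_left ((div_le_one hε).2 hu.2.le)]
    exact ⟨fun t ht => (key t ht).1, fun t ht => (key t ht).2.1, fun t ht => (key t ht).2.2⟩
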